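/- Let B ⊂ ℝ be a ℚ-linearly independent set and f : 𝔻 → ℂ a bounded holomorphic function which is non-constant. Then the family {e^{b f} : b ∈ B} ⊂ H^∞(𝔻) is algebraically independent over ℂ. -/

import Mathlib

open MvPolynomial Finsupp

/-- Exponential functions with distinct (real) frequencies are linearly independent. -/
lemma expLinIndep : LinearIndependent ℂ
    (fun c : ℝ => fun w : ℂ => Complex.exp (c * w)) := by
  have h := linearIndependent_monoidHom (Multiplicative ℂ) ℂ
  let φ : ℝ → (Multiplicative ℂ →* ℂ) := fun c =>
    { toFun := fun w => Complex.exp (c * w.toAdd)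
      map_one' := by simp
      map_mul' := fun a b => by
        simp [mul_add, Complex.exp_add] }
  have hinj : Function.Injective φ := by
    intro c c' hcc
    have := congrArg (fun ψ : Multiplicative ℂ →* ℂ => ψ (Multiplicative.ofAdd 1)) hcc
    simp only [φ, MonoidHom.coe_mk, OneHom.coe_mk, toAdd_ofAdd, mul_one] at this
    have habs := congrArg (fun z : ℂ => ‖z‖) this
    simpa [Complex.norm_exp, Real.exp_eq_exp] using habs
  exact h.comp φ hinj

theorem stmt_9 (B : Set ℝ) (hB : LinearIndependent ℚ ((↑) : B → ℝ))
    (f : ℂ → ℂ)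
    (hf : DifferentiableOn ℂ f (Metric.ball (0 : ℂ) 1))
    (hb : ∃ C, ∀ z ∈ Metric.ball (0 : ℂ) 1, ‖f z‖ ≤ C)
    (hnc : ∃ z ∈ Metric.ball (0 : ℂ) 1, ∃ z' ∈ Metric.ball (0 : ℂ) 1, f z ≠ f z') :
    AlgebraicIndependent ℂ
      (fun b : B => fun z : Metric.ball (0 : ℂ) 1 => Complex.exp ((b : ℝ) * f z)) := by
  classical
  -- the linear map sending a multidegree to the corresponding real frequency
  set L : (B →₀ ℕ) → ℝ := fun d => d.sum fun b n => (n : ℝ) * (b : ℝ) with hLdef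
  -- `L` is injective by ℚ-linear independence of `B`
  have hLsum : ∀ d : B →₀ ℕ, L d = ∑ b ∈ d.support, (d b : ℝ) * (b : ℝ) := fun d => rfl
  have hLinj : Function.Injective L := by
    intro d d' hdd
    have hq : Function.Injective ((↑) : ℕ → ℚ) := Nat.cast_injective
    have key : Finsupp.linearCombination ℚ ((↑) : B → ℝ)
          (d.mapRange ((↑) : ℕ → ℚ) (by simp))
        = Finsupp.linearCombination ℚ ((↑) : B → ℝ)
          (d'.mapRange ((↑) : ℕ → ℚ) (by simp)) := by
      rw [Finsupp.linearCombination_apply, Finsupp.linearCombination_apply,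
        Finsupp.sum_mapRange_index (by simp), Finsupp.sum_mapRange_index (by simp)]
      have : ∀ e : B →₀ ℕ, (e.sum fun b n => ((n : ℚ) • (b : ℝ))) = L e := by
        intro e
        rw [Finsupp.sum, hLsum]
        exact Finset.sum_congr rfl fun b _ => by
          rw [Rat.smul_def]; push_cast; ring
      rw [this d, this d', hdd]
    have h2 : d.mapRange ((↑) : ℕ → ℚ) (by simp) = d'.mapRange ((↑) : ℕ → ℚ) (by simp) := by
      have := linearIndependent_iff.mp hB
        (d.mapRange ((↑) : ℕ → ℚ) (by simp) - d'.mapRange ((↑) : ℕ → ℚ) (by simp))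
        (by rw [map_sub, key, sub_self])
      exact sub_eq_zero.mp this
    exact Finsupp.mapRange_injective _ (by simp) hq h2
  rw [algebraicIndependent_iff]
  intro p hp
  -- pointwise evaluation of the polynomial relation
  have hball : ∀ z ∈ Metric.ball (0 : ℂ) 1,
      ∑ d ∈ p.support, p.coeff d * Complex.exp ((L d : ℝ) * f z) = 0 := by
    intro z hz
    have h1 : (Pi.evalAlgHom ℂ (fun _ : Metric.ball (0 : ℂ) 1 => ℂ) ⟨z, hz⟩)
        ((aeval (fun b : B => fun z : Metric.ball (0 : ℂ) 1 =>
          Complex.exp ((b : ℝ) * f z)) : MvPolynomial B ℂ →ₐ[ℂ] _) p) = 0 := by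
      rw [hp]; rfl
    rw [comp_aeval_apply] at h1
    simp only [Pi.evalAlgHom_apply] at h1
    rw [show (aeval fun b : B => Complex.exp ((b : ℝ) * f z)) p
        = eval (fun b : B => Complex.exp ((b : ℝ) * f z)) p from by
      rfl, eval_eq] at h1
    rw [← h1]
    refine Finset.sum_congr rfl fun d _ => ?_
    simp_rw [← Complex.exp_nat_mul, ← Complex.exp_sum]
    rw [hLsum]
    push_cast [Finset.sum_mul]
    exact congrArg (coeff d p * ·) (congrArg Complex.exp (Finset.sum_congr rfl fun b _ => by ring))
  -- the entire function given by the finite exponential sum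
  set g : ℂ → ℂ := fun w => ∑ d ∈ p.support, p.coeff d * Complex.exp ((L d : ℝ) * w) with hg
  have hganal : AnalyticOnNhd ℂ g Set.univ := by
    refine DifferentiableOn.analyticOnNhd ?_ isOpen_univ
    refine Differentiable.differentiableOn (Differentiable.fun_sum fun d _ => ?_)
    exact (Complex.differentiable_exp.comp ((differentiable_const _).mul differentiable_id)).const_mul _
  -- open mapping: the image of the ball under f is open
  have hfanal : AnalyticOnNhd ℂ f (Metric.ball (0 : ℂ) 1) :=
    hf.analyticOnNhd Metric.isOpen_ball
  have hprec : IsPreconnected (Metric.ball (0 : ℂ) 1) :=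
    (convex_ball (0 : ℂ) 1).isPreconnected
  rcases hfanal.is_constant_or_isOpen hprec with hconst | hopen
  · obtain ⟨w, hw⟩ := hconst
    obtain ⟨z, hz, z', hz', hne⟩ := hnc
    exact absurd ((hw z hz).trans (hw z' hz').symm) hne
  · have himg : IsOpen (f '' Metric.ball (0 : ℂ) 1) :=
      hopen _ le_rfl Metric.isOpen_ball
    obtain ⟨z₀, hz₀, z₁, hz₁, hne⟩ := hnc
    have hmem : f z₀ ∈ f '' Metric.ball (0 : ℂ) 1 := ⟨z₀, hz₀, rfl⟩
    -- g vanishes on a neighbourhood of f z₀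
    have hev : g =ᶠ[nhds (f z₀)] 0 := by
      filter_upwards [himg.mem_nhds hmem] with w hw
      obtain ⟨z, hz, rfl⟩ := hw
      exact hball z hz
    have hgzero : Set.EqOn g 0 Set.univ :=
      hganal.eqOn_zero_of_preconnected_of_eventuallyEq_zero isPreconnected_univ
        (Set.mem_univ (f z₀)) hev
    -- linear independence of exponentials finishes the proof
    have li : LinearIndependent ℂ
        (fun d : B →₀ ℕ => fun w : ℂ => Complex.exp ((L d : ℝ) * w)) :=
      expLinIndep.comp L hLinj
    have hcoeff : ∀ d ∈ p.support, p.coeff d = 0 := by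
      refine linearIndependent_iff'.mp li p.support (fun d => p.coeff d) ?_
      funext w
      have := hgzero (Set.mem_univ w)
      simpa [Finset.sum_apply, hg] using this
    ext d
    by_cases hd : d ∈ p.support
    · simpa using hcoeff d hd
    · simpa using MvPolynomial.notMem_support_iff.mp hd
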